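/- For every integer k ≥ 2 there exists an integer r such that the rainbow k-connectivity of K_{r,r} equals 3; in particular r = 2k·⌈k/2⌉ works. -/
import Mathlib

open SimpleGraph

/-- The complete bipartite graph `K_{r,r}` with both parts `Fin r`. -/
abbrev Krr (r : ℕ) : SimpleGraph (Fin r ⊕ Fin r) :=
  completeBipartiteGraph (Fin r) (Fin r)

/-- A walk is a rainbow path (w.r.t. edge-coloring `c`) if it is a path and
all its edges receive pairwise distinct colors. -/
def RainbowPath {V α : Type*} {G : SimpleGraph V} (c : Sym2 V → α) {u v : V}
    (p : G.Walk u v) : Prop :=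
  p.IsPath ∧ (p.edges.map c).Nodup

/-- Two `u`-`v` walks are internally disjoint if they share no vertices other
than `u` and `v`. -/
def IntDisjoint {V : Type*} {G : SimpleGraph V} {u v : V}
    (p q : G.Walk u v) : Prop :=
  ∀ x, x ∈ p.support → x ∈ q.support → x = u ∨ x = v

/-- `G` admits a `j`-edge-coloring under which every two distinct vertices are
joined by at least `k` internally disjoint rainbow paths. -/
def HasRainbowKColoring {V : Type*} (G : SimpleGraph V) (k j : ℕ) : Prop :=
  ∃ c : Sym2 V → Fin j, ∀ u v : V, u ≠ v →
    ∃ P : Fin k → G.Walk u v, Function.Injective P ∧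
      (∀ i, RainbowPath c (P i)) ∧
      ∀ i i', i ≠ i' → IntDisjoint (P i) (P i')

/-- The rainbow `k`-connectivity: the least number of colors as above. -/
noncomputable def rck {V : Type*} (G : SimpleGraph V) (k : ℕ) : ℕ :=
  sInf {j | HasRainbowKColoring G k j}

namespace RBAux


/-! ### Arithmetic core -/

def cd (x σ τ y σ' τ' : ℕ) : ℕ :=
  (((if x = y then 1 else 0) + (if τ = τ' then 1 else 0)) * (σ + σ')) % 3

def enc (m x σ τ : ℕ) : ℕ := 2*m*x + m*σ + τ

def colN (m a b : ℕ) : ℕ := cd (a/(2*m)) (a/m%2) (a%m) (b/(2*m)) (b/m%2) (b%m)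

lemma cd_lt3 (x σ τ y σ' τ' : ℕ) : cd x σ τ y σ' τ' < 3 := Nat.mod_lt _ (by norm_num)

lemma cd_symm (x σ τ y σ' τ' : ℕ) : cd x σ τ y σ' τ' = cd y σ' τ' x σ τ := by
  unfold cd
  congr 2
  · congr 1 <;> simp [eq_comm]
  · omega

lemma colN_symm (m a b : ℕ) : colN m a b = colN m b a := cd_symm ..

lemma colN_lt3 (m a b : ℕ) : colN m a b < 3 := cd_lt3 ..

lemma digits {m σ τ : ℕ} (x : ℕ) (hm : 0 < m) (hσ : σ < 2) (hτ : τ < m) :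
    enc m x σ τ / (2*m) = x ∧ enc m x σ τ / m % 2 = σ ∧ enc m x σ τ % m = τ := by
  have h2m : 0 < 2*m := by omega
  have hc : m*σ + τ < 2*m := by interval_cases σ <;> omega
  refine ⟨?_, ?_, ?_⟩
  · show (2*m*x + m*σ + τ) / (2*m) = x
    rw [show 2*m*x + m*σ + τ = 2*m*x + (m*σ+τ) by ring, Nat.mul_add_div h2m,
      Nat.div_eq_of_lt hc]
    omega
  · show (2*m*x + m*σ + τ) / m % 2 = σ
    rw [show 2*m*x + m*σ + τ = m*(2*x+σ) + τ by ring, Nat.mul_add_div hm,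
      Nat.div_eq_of_lt hτ]
    omega
  · show (2*m*x + m*σ + τ) % m = τ
    rw [show 2*m*x + m*σ + τ = m*(2*x+σ) + τ by ring, Nat.mul_add_mod,
      Nat.mod_eq_of_lt hτ]

lemma enc_lt {k m x σ τ : ℕ} (hx : x < k) (hσ : σ < 2) (hτ : τ < m) :
    enc m x σ τ < 2*k*m := by
  unfold enc
  have h1 : 2*m*(x+1) ≤ 2*m*k := Nat.mul_le_mul_left _ hx
  have h2 : 2*m*k = 2*k*m := by ring
  have h3 : 2*m*(x+1) = 2*m*x + 2*m := by ring
  interval_cases σ <;> omega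

lemma colN_enc {m x σ τ y σ' τ' : ℕ} (hm : 0 < m) (hσ : σ < 2) (hτ : τ < m)
    (hσ' : σ' < 2) (hτ' : τ' < m) :
    colN m (enc m x σ τ) (enc m y σ' τ') = cd x σ τ y σ' τ' := by
  obtain ⟨d1, d2, d3⟩ := digits x hm hσ hτ
  obtain ⟨e1, e2, e3⟩ := digits y hm hσ' hτ'
  unfold colN
  rw [d1, d2, d3, e1, e2, e3]

lemma enc_inj {m x σ τ x' σ' τ' : ℕ} (hm : 0 < m) (hσ : σ < 2) (hτ : τ < m)
    (hσ' : σ' < 2) (hτ' : τ' < m) (h : enc m x σ τ = enc m x' σ' τ') :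
    x = x' ∧ σ = σ' ∧ τ = τ' := by
  obtain ⟨d1, d2, d3⟩ := digits x hm hσ hτ
  obtain ⟨e1, e2, e3⟩ := digits (m := m) x' hm hσ' hτ'
  rw [h] at d1 d2 d3
  rw [d1] at e1; rw [d2] at e2; rw [d3] at e3
  exact ⟨e1.symm ▸ rfl, e2.symm ▸ rfl, e3.symm ▸ rfl⟩

lemma decompose {k m a : ℕ} (hm : 0 < m) (ha : a < 2*k*m) :
    a/(2*m) < k ∧ a/m%2 < 2 ∧ a%m < m ∧ enc m (a/(2*m)) (a/m%2) (a%m) = a := by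
  have h2m : 0 < 2*m := by omega
  refine ⟨?_, Nat.mod_lt _ (by norm_num), Nat.mod_lt _ hm, ?_⟩
  · rw [Nat.div_lt_iff_lt_mul h2m]
    calc a < 2*k*m := ha
    _ = k * (2*m) := by ring
  · unfold enc
    have hq : a / (2*m) = a / m / 2 := by
      rw [Nat.div_div_eq_div_mul, Nat.mul_comm m 2]
    rw [hq]
    have h1 : m * (a / m) + a % m = a := Nat.div_add_mod a m
    have h2 : 2 * (a / m / 2) + a / m % 2 = a / m := by omega
    calc 2*m*(a/m/2) + m*(a/m%2) + a%m = m * (2*(a/m/2) + a/m%2) + a%m := by ring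
    _ = m * (a/m) + a%m := by rw [h2]
    _ = a := h1


/-- certificate for same-side pairs -/
lemma Scert {k m : ℕ} (hm : 0 < m) (hkm : k ≤ 2*m)
    {x σ τ x' σ' τ' : ℕ} (hx : x < k) (hσ : σ < 2) (hτ : τ < m)
    (hx' : x' < k) (hσ' : σ' < 2) (hτ' : τ' < m)
    (hne : ¬(x = x' ∧ σ = σ' ∧ τ = τ')) :
    ∃ J : Fin k → ℕ × ℕ × ℕ, Function.Injective J ∧ ∀ i : Fin k,
      (J i).1 < k ∧ (J i).2.1 < 2 ∧ (J i).2.2 < m ∧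
      cd x σ τ (J i).1 (J i).2.1 (J i).2.2 ≠ cd x' σ' τ' (J i).1 (J i).2.1 (J i).2.2 := by
  by_cases hσσ : σ = σ'
  · by_cases hxx : x = x'
    · have hττ : τ ≠ τ' := fun h => hne ⟨hxx, hσσ, h⟩
      refine ⟨fun i => ((i : ℕ), 1 - σ, τ), ?_, ?_⟩
      · intro i i' h
        dsimp only at h
        simp only [Prod.mk.injEq] at h
        exact Fin.ext h.1
      · intro i
        dsimp only
        refine ⟨i.isLt, by omega, hτ, ?_⟩
        subst hxx; subst hσσ
        show cd x σ τ i (1-σ) τ ≠ cd x σ τ' i (1-σ) τ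
        interval_cases σ <;> simp only [cd] <;> split_ifs <;> omega
    · by_cases hττ : τ = τ'
      · refine ⟨fun i => if (i : ℕ) < m then (x, 1, (i:ℕ)) else (x', 1, (i:ℕ) - m), ?_, ?_⟩
        · intro i i' h
          have hi := i.isLt; have hi' := i'.isLt
          dsimp only at h
          split_ifs at h with h1 h2 h2 <;> simp only [Prod.mk.injEq] at h
          · exact Fin.ext h.2.2
          · exact absurd h.1 hxx
          · exact absurd h.1.symm hxx
          · exact Fin.ext (by omega)
        · intro i
          have hi := i.isLt
          dsimp only
          by_cases h1 : (i:ℕ) < m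
          · rw [show (if (i : ℕ) < m then (x, 1, (i:ℕ)) else (x', 1, (i:ℕ) - m)) = (x,1,(i:ℕ)) from if_pos h1]
            dsimp only
            refine ⟨hx, by omega, h1, ?_⟩
            subst hσσ; subst hττ
            show cd x σ τ x 1 i ≠ cd x' σ τ x 1 (i:ℕ)
            interval_cases σ <;> simp only [cd] <;> split_ifs <;> omega
          · rw [show (if (i : ℕ) < m then (x, 1, (i:ℕ)) else (x', 1, (i:ℕ) - m)) = (x',1,(i:ℕ)-m) from if_neg h1]
            dsimp only
            refine ⟨hx', by omega, by omega, ?_⟩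
            subst hσσ; subst hττ
            show cd x σ τ x' 1 ((i:ℕ)-m) ≠ cd x' σ τ x' 1 ((i:ℕ)-m)
            interval_cases σ <;> simp only [cd] <;> split_ifs <;> omega
      · refine ⟨fun i => if (i : ℕ) = x' then (x', 1, τ') else ((i:ℕ), 1, τ), ?_, ?_⟩
        · intro i i' h
          dsimp only at h
          split_ifs at h with h1 h2 h2 <;> simp only [Prod.mk.injEq] at h
          · exact Fin.ext (by omega)
          · exact absurd h.2.2.symm hττ
          · exact absurd h.2.2 hττ
          · exact Fin.ext h.1
        · intro i
          dsimp only
          by_cases h1 : (i:ℕ) = x'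
          · rw [show (if (i : ℕ) = x' then (x', 1, τ') else ((i:ℕ), 1, τ)) = (x',1,τ') from if_pos h1]
            dsimp only
            refine ⟨hx', by omega, hτ', ?_⟩
            subst hσσ
            show cd x σ τ x' 1 τ' ≠ cd x' σ τ' x' 1 τ'
            interval_cases σ <;> simp only [cd] <;> split_ifs <;> omega
          · rw [show (if (i : ℕ) = x' then (x', 1, τ') else ((i:ℕ), 1, τ)) = ((i:ℕ),1,τ) from if_neg h1]
            dsimp only
            refine ⟨i.isLt, by omega, hτ, ?_⟩
            subst hσσ
            show cd x σ τ i 1 τ ≠ cd x' σ τ' i 1 τ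
            interval_cases σ <;> simp only [cd] <;> split_ifs <;> omega
  · rcases (by omega : (σ = 0 ∧ σ' = 1) ∨ (σ = 1 ∧ σ' = 0)) with ⟨h0,h1⟩|⟨h0,h1⟩ <;>
      subst h0 <;> subst h1
    · refine ⟨fun i => ((i:ℕ), 0, τ'), ?_, ?_⟩
      · intro i i' h
        dsimp only at h
        simp only [Prod.mk.injEq] at h
        exact Fin.ext h.1
      · intro i
        dsimp only
        refine ⟨i.isLt, by omega, hτ', ?_⟩
        show cd x 0 τ i 0 τ' ≠ cd x' 1 τ' i 0 τ'
        simp only [cd] <;> split_ifs <;> omega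
    · refine ⟨fun i => ((i:ℕ), 0, τ), ?_, ?_⟩
      · intro i i' h
        dsimp only at h
        simp only [Prod.mk.injEq] at h
        exact Fin.ext h.1
      · intro i
        dsimp only
        refine ⟨i.isLt, by omega, hτ, ?_⟩
        show cd x 1 τ i 0 τ ≠ cd x' 0 τ' i 0 τ
        simp only [cd] <;> split_ifs <;> omega

lemma Ocert {m : ℕ} (hm : 2 ≤ m)
    {x σ τ y σ'' τ'' : ℕ} (i : ℕ) (hσ : σ < 2) (hτ : τ < m) (hσ'' : σ'' < 2) (hτ'' : τ'' < m) :
    ∃ σa τa σb τb : ℕ, σa < 2 ∧ τa < m ∧ σb < 2 ∧ τb < m ∧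
      ¬(i = y ∧ σa = σ'' ∧ τa = τ'') ∧ ¬(i = x ∧ σb = σ ∧ τb = τ) ∧
      cd x σ τ i σa τa ≠ cd i σb τb i σa τa ∧
      cd i σb τb i σa τa ≠ cd i σb τb y σ'' τ'' ∧
      cd x σ τ i σa τa ≠ cd i σb τb y σ'' τ'' := by
  obtain ⟨o, ho1, ho2⟩ : ∃ o, o < m ∧ o ≠ τ := by
    refine ⟨(τ+1) % m, Nat.mod_lt _ (by omega), ?_⟩
    by_cases h : τ + 1 < m
    · rw [Nat.mod_eq_of_lt h]; omega
    · have h2 : τ + 1 = m := by omega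
      rw [h2, Nat.mod_self]; omega
  by_cases hP : x = i
  · by_cases hR : i = y
    · by_cases hD : τ = τ''
      · rcases (by omega : σ = 0 ∨ σ = 1) with h0 | h0 <;>
          rcases (by omega : σ'' = 0 ∨ σ'' = 1) with h1 | h1 <;> subst h0 <;> subst h1
        · exact ⟨0, o, 1, o, by omega, by omega, by omega, by omega, by omega, by omega, by simp only [cd]; split_ifs <;> omega, by simp only [cd]; split_ifs <;> omega, by simp only [cd]; split_ifs <;> omega⟩
        · exact ⟨0, τ, 1, o, by omega, by omega, by omega, by omega, by omega, by omega, by simp only [cd]; split_ifs <;> omega, by simp only [cd]; split_ifs <;> omega, by simp only [cd]; split_ifs <;> omega⟩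
        · exact ⟨1, o, 0, τ, by omega, by omega, by omega, by omega, by omega, by omega, by simp only [cd]; split_ifs <;> omega, by simp only [cd]; split_ifs <;> omega, by simp only [cd]; split_ifs <;> omega⟩
        · exact ⟨0, o, 0, τ, by omega, by omega, by omega, by omega, by omega, by omega, by simp only [cd]; split_ifs <;> omega, by simp only [cd]; split_ifs <;> omega, by simp only [cd]; split_ifs <;> omega⟩
      · rcases (by omega : σ = 0 ∨ σ = 1) with h0 | h0 <;>
          rcases (by omega : σ'' = 0 ∨ σ'' = 1) with h1 | h1 <;> subst h0 <;> subst h1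
        · exact ⟨0, τ, 1, τ, by omega, by omega, by omega, by omega, by omega, by omega, by simp only [cd]; split_ifs <;> omega, by simp only [cd]; split_ifs <;> omega, by simp only [cd]; split_ifs <;> omega⟩
        · exact ⟨0, τ'', 1, τ, by omega, by omega, by omega, by omega, by omega, by omega, by simp only [cd]; split_ifs <;> omega, by simp only [cd]; split_ifs <;> omega, by simp only [cd]; split_ifs <;> omega⟩
        · exact ⟨1, τ, 0, τ, by omega, by omega, by omega, by omega, by omega, by omega, by simp only [cd]; split_ifs <;> omega, by simp only [cd]; split_ifs <;> omega, by simp only [cd]; split_ifs <;> omega⟩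
        · exact ⟨0, τ, 0, τ, by omega, by omega, by omega, by omega, by omega, by omega, by simp only [cd]; split_ifs <;> omega, by simp only [cd]; split_ifs <;> omega, by simp only [cd]; split_ifs <;> omega⟩
    · by_cases hD : τ = τ''
      · rcases (by omega : σ = 0 ∨ σ = 1) with h0 | h0 <;>
          rcases (by omega : σ'' = 0 ∨ σ'' = 1) with h1 | h1 <;> subst h0 <;> subst h1
        · exact ⟨0, τ, 1, τ, by omega, by omega, by omega, by omega, by omega, by omega, by simp only [cd]; split_ifs <;> omega, by simp only [cd]; split_ifs <;> omega, by simp only [cd]; split_ifs <;> omega⟩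
        · exact ⟨0, o, 1, τ, by omega, by omega, by omega, by omega, by omega, by omega, by simp only [cd]; split_ifs <;> omega, by simp only [cd]; split_ifs <;> omega, by simp only [cd]; split_ifs <;> omega⟩
        · exact ⟨0, o, 1, o, by omega, by omega, by omega, by omega, by omega, by omega, by simp only [cd]; split_ifs <;> omega, by simp only [cd]; split_ifs <;> omega, by simp only [cd]; split_ifs <;> omega⟩
        · exact ⟨0, o, 1, o, by omega, by omega, by omega, by omega, by omega, by omega, by simp only [cd]; split_ifs <;> omega, by simp only [cd]; split_ifs <;> omega, by simp only [cd]; split_ifs <;> omega⟩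
      · rcases (by omega : σ = 0 ∨ σ = 1) with h0 | h0 <;>
          rcases (by omega : σ'' = 0 ∨ σ'' = 1) with h1 | h1 <;> subst h0 <;> subst h1
        · exact ⟨0, τ'', 1, τ'', by omega, by omega, by omega, by omega, by omega, by omega, by simp only [cd]; split_ifs <;> omega, by simp only [cd]; split_ifs <;> omega, by simp only [cd]; split_ifs <;> omega⟩
        · exact ⟨0, τ, 1, τ'', by omega, by omega, by omega, by omega, by omega, by omega, by simp only [cd]; split_ifs <;> omega, by simp only [cd]; split_ifs <;> omega, by simp only [cd]; split_ifs <;> omega⟩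
        · exact ⟨1, τ, 0, τ, by omega, by omega, by omega, by omega, by omega, by omega, by simp only [cd]; split_ifs <;> omega, by simp only [cd]; split_ifs <;> omega, by simp only [cd]; split_ifs <;> omega⟩
        · exact ⟨0, τ, 0, τ'', by omega, by omega, by omega, by omega, by omega, by omega, by simp only [cd]; split_ifs <;> omega, by simp only [cd]; split_ifs <;> omega, by simp only [cd]; split_ifs <;> omega⟩
  · by_cases hR : i = y
    · by_cases hD : τ = τ''
      · rcases (by omega : σ = 0 ∨ σ = 1) with h0 | h0 <;>
          rcases (by omega : σ'' = 0 ∨ σ'' = 1) with h1 | h1 <;> subst h0 <;> subst h1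
        · exact ⟨0, o, 1, o, by omega, by omega, by omega, by omega, by omega, by omega, by simp only [cd]; split_ifs <;> omega, by simp only [cd]; split_ifs <;> omega, by simp only [cd]; split_ifs <;> omega⟩
        · exact ⟨0, τ, 1, o, by omega, by omega, by omega, by omega, by omega, by omega, by simp only [cd]; split_ifs <;> omega, by simp only [cd]; split_ifs <;> omega, by simp only [cd]; split_ifs <;> omega⟩
        · exact ⟨0, o, 1, o, by omega, by omega, by omega, by omega, by omega, by omega, by simp only [cd]; split_ifs <;> omega, by simp only [cd]; split_ifs <;> omega, by simp only [cd]; split_ifs <;> omega⟩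
        · exact ⟨0, τ, 0, τ, by omega, by omega, by omega, by omega, by omega, by omega, by simp only [cd]; split_ifs <;> omega, by simp only [cd]; split_ifs <;> omega, by simp only [cd]; split_ifs <;> omega⟩
      · rcases (by omega : σ = 0 ∨ σ = 1) with h0 | h0 <;>
          rcases (by omega : σ'' = 0 ∨ σ'' = 1) with h1 | h1 <;> subst h0 <;> subst h1
        · exact ⟨0, τ, 1, τ, by omega, by omega, by omega, by omega, by omega, by omega, by simp only [cd]; split_ifs <;> omega, by simp only [cd]; split_ifs <;> omega, by simp only [cd]; split_ifs <;> omega⟩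
        · exact ⟨0, τ'', 1, τ, by omega, by omega, by omega, by omega, by omega, by omega, by simp only [cd]; split_ifs <;> omega, by simp only [cd]; split_ifs <;> omega, by simp only [cd]; split_ifs <;> omega⟩
        · exact ⟨1, τ, 0, τ'', by omega, by omega, by omega, by omega, by omega, by omega, by simp only [cd]; split_ifs <;> omega, by simp only [cd]; split_ifs <;> omega, by simp only [cd]; split_ifs <;> omega⟩
        · exact ⟨0, τ, 0, τ'', by omega, by omega, by omega, by omega, by omega, by omega, by simp only [cd]; split_ifs <;> omega, by simp only [cd]; split_ifs <;> omega, by simp only [cd]; split_ifs <;> omega⟩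
    · by_cases hD : τ = τ''
      · rcases (by omega : σ = 0 ∨ σ = 1) with h0 | h0 <;>
          rcases (by omega : σ'' = 0 ∨ σ'' = 1) with h1 | h1 <;> subst h0 <;> subst h1
        · exact ⟨0, τ, 1, τ, by omega, by omega, by omega, by omega, by omega, by omega, by simp only [cd]; split_ifs <;> omega, by simp only [cd]; split_ifs <;> omega, by simp only [cd]; split_ifs <;> omega⟩
        · exact ⟨0, o, 1, τ, by omega, by omega, by omega, by omega, by omega, by omega, by simp only [cd]; split_ifs <;> omega, by simp only [cd]; split_ifs <;> omega, by simp only [cd]; split_ifs <;> omega⟩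
        · exact ⟨1, o, 1, τ, by omega, by omega, by omega, by omega, by omega, by omega, by simp only [cd]; split_ifs <;> omega, by simp only [cd]; split_ifs <;> omega, by simp only [cd]; split_ifs <;> omega⟩
        · exact ⟨0, o, 1, τ, by omega, by omega, by omega, by omega, by omega, by omega, by simp only [cd]; split_ifs <;> omega, by simp only [cd]; split_ifs <;> omega, by simp only [cd]; split_ifs <;> omega⟩
      · rcases (by omega : σ = 0 ∨ σ = 1) with h0 | h0 <;>
          rcases (by omega : σ'' = 0 ∨ σ'' = 1) with h1 | h1 <;> subst h0 <;> subst h1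
        · exact ⟨0, τ'', 1, τ'', by omega, by omega, by omega, by omega, by omega, by omega, by simp only [cd]; split_ifs <;> omega, by simp only [cd]; split_ifs <;> omega, by simp only [cd]; split_ifs <;> omega⟩
        · exact ⟨0, τ, 1, τ'', by omega, by omega, by omega, by omega, by omega, by omega, by simp only [cd]; split_ifs <;> omega, by simp only [cd]; split_ifs <;> omega, by simp only [cd]; split_ifs <;> omega⟩
        · exact ⟨0, τ, 1, τ, by omega, by omega, by omega, by omega, by omega, by omega, by simp only [cd]; split_ifs <;> omega, by simp only [cd]; split_ifs <;> omega, by simp only [cd]; split_ifs <;> omega⟩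
        · exact ⟨0, τ, 1, τ, by omega, by omega, by omega, by omega, by omega, by omega, by simp only [cd]; split_ifs <;> omega, by simp only [cd]; split_ifs <;> omega, by simp only [cd]; split_ifs <;> omega⟩

lemma Ok2 : ∀ u < 4, ∀ v < 4, ∃ w < 4, ∃ z < 4, w ≠ v ∧ z ≠ u ∧
    colN 1 u w ≠ colN 1 z w ∧ colN 1 z w ≠ colN 1 z v ∧ colN 1 u w ≠ colN 1 z v := by
  decide

def fin3 (n : ℕ) : Fin 3 := ⟨n % 3, Nat.mod_lt _ (by norm_num)⟩

lemma fin3_ne {p q : ℕ} (hp : p < 3) (hq : q < 3) (h : p ≠ q) : fin3 p ≠ fin3 q := by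
  simp only [fin3, Ne, Fin.mk.injEq, Nat.mod_eq_of_lt hp, Nat.mod_eq_of_lt hq]
  exact h

variable {r : ℕ}

def colfun (m : ℕ) : (Fin r ⊕ Fin r) → (Fin r ⊕ Fin r) → Fin 3
  | .inl a, .inr b => fin3 (colN m a b)
  | .inr a, .inl b => fin3 (colN m b a)
  | _, _ => 0

lemma colfun_symm (m : ℕ) : ∀ u v : Fin r ⊕ Fin r, colfun m u v = colfun m v u := by
  rintro (a|a) (b|b) <;> rfl

def coloring (m : ℕ) : Sym2 (Fin r ⊕ Fin r) → Fin 3 :=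
  Sym2.lift ⟨colfun m, colfun_symm m⟩

@[simp] lemma coloring_LR (m : ℕ) (a b : Fin r) :
    coloring m s(Sum.inl a, Sum.inr b) = fin3 (colN m a b) := rfl
@[simp] lemma coloring_RL (m : ℕ) (a b : Fin r) :
    coloring m s(Sum.inr a, Sum.inl b) = fin3 (colN m b a) := rfl

lemma adjLR (a b : Fin r) : (Krr r).Adj (.inl a) (.inr b) := Or.inl ⟨rfl, rfl⟩

def pEdge (a b : Fin r) : (Krr r).Walk (.inl a) (.inr b) := .cons (adjLR a b) .nil
def p2L (a j b : Fin r) : (Krr r).Walk (.inl a) (.inl b) :=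
  .cons (adjLR a j) (.cons ((adjLR b j).symm) .nil)
def p2R (a j b : Fin r) : (Krr r).Walk (.inr a) (.inr b) :=
  .cons ((adjLR j a).symm) (.cons (adjLR j b) .nil)
def p3 (a w z b : Fin r) : (Krr r).Walk (.inl a) (.inr b) :=
  .cons (adjLR a w) (.cons ((adjLR z w).symm) (.cons (adjLR z b) .nil))

@[simp] lemma pEdge_support (a b : Fin r) :
    (pEdge a b).support = [.inl a, .inr b] := rfl
@[simp] lemma p2L_support (a j b : Fin r) :
    (p2L a j b).support = [.inl a, .inr j, .inl b] := rfl
@[simp] lemma p2R_support (a j b : Fin r) :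
    (p2R a j b).support = [.inr a, .inl j, .inr b] := rfl
@[simp] lemma p3_support (a w z b : Fin r) :
    (p3 a w z b).support = [.inl a, .inr w, .inl z, .inr b] := rfl
@[simp] lemma pEdge_edges (a b : Fin r) :
    (pEdge a b).edges = [s(.inl a, .inr b)] := rfl
@[simp] lemma p2L_edges (a j b : Fin r) :
    (p2L a j b).edges = [s(.inl a, .inr j), s(.inr j, .inl b)] := rfl
@[simp] lemma p2R_edges (a j b : Fin r) :
    (p2R a j b).edges = [s(.inr a, .inl j), s(.inl j, .inr b)] := rfl
@[simp] lemma p3_edges (a w z b : Fin r) :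
    (p3 a w z b).edges = [s(.inl a, .inr w), s(.inr w, .inl z), s(.inl z, .inr b)] := rfl

lemma pEdge_isPath (a b : Fin r) : (pEdge a b).IsPath := by
  apply Walk.IsPath.mk'
  simp

lemma p2L_isPath {a b : Fin r} (j : Fin r) (hab : a ≠ b) : (p2L a j b).IsPath := by
  apply Walk.IsPath.mk'
  simp [hab]

lemma p2R_isPath {a b : Fin r} (j : Fin r) (hab : a ≠ b) : (p2R a j b).IsPath := by
  apply Walk.IsPath.mk'
  simp [hab]

lemma p3_isPath {a w z b : Fin r} (hwb : w ≠ b) (hza : z ≠ a) : (p3 a w z b).IsPath := by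
  apply Walk.IsPath.mk'
  simp [hwb, (Ne.symm hza)]


/-! ### the cross system -/

lemma crossSys (k m : ℕ) (hm : 0 < m) (hsp : 2 ≤ m ∨ (k = 2 ∧ m = 1))
    (a b : Fin (2*k*m)) :
    ∃ P : Fin k → (Krr (2*k*m)).Walk (.inl a) (.inr b),
      Function.Injective P ∧ (∀ i, RainbowPath (coloring m) (P i)) ∧
      ∀ i i', i ≠ i' → IntDisjoint (P i) (P i') := by
  obtain ⟨hxa, hσa, hτa, hea⟩ := decompose (k := k) hm a.isLt
  obtain ⟨hxb, hσb, hτb, heb⟩ := decompose (k := k) hm b.isLt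
  rcases hsp with hm2 | ⟨hk2, hm1⟩
  · -- k ≥ 3 case (m ≥ 2): one 3-path through each block
    choose σa' τa' σb' τb' hb1 hb2 hb3 hb4 hb5 hb6 hc1 hc2 hc3 using
      fun i : Fin k => Ocert hm2 (x := (a:ℕ)/(2*m)) (y := (b:ℕ)/(2*m)) (i:ℕ) hσa hτa hσb hτb
    set W : Fin k → Fin (2*k*m) :=
      fun i => ⟨enc m i (σa' i) (τa' i), enc_lt i.isLt (hb1 i) (hb2 i)⟩ with hW
    set Z : Fin k → Fin (2*k*m) :=
      fun i => ⟨enc m i (σb' i) (τb' i), enc_lt i.isLt (hb3 i) (hb4 i)⟩ with hZ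
    have hWb : ∀ i, W i ≠ b := by
      intro i h
      have hv : enc m i (σa' i) (τa' i) = enc m ((b:ℕ)/(2*m)) ((b:ℕ)/m%2) ((b:ℕ)%m) := by
        rw [heb]; exact congrArg Fin.val h
      exact hb5 i (enc_inj hm (hb1 i) (hb2 i) hσb hτb hv)
    have hZa : ∀ i, Z i ≠ a := by
      intro i h
      have hv : enc m i (σb' i) (τb' i) = enc m ((a:ℕ)/(2*m)) ((a:ℕ)/m%2) ((a:ℕ)%m) := by
        rw [hea]; exact congrArg Fin.val h
      exact hb6 i (enc_inj hm (hb3 i) (hb4 i) hσa hτa hv)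
    have hWinj : ∀ i i' : Fin k, W i = W i' → i = i' := by
      intro i i' h
      have hv : enc m i (σa' i) (τa' i) = enc m i' (σa' i') (τa' i') := congrArg Fin.val h
      exact Fin.ext (enc_inj hm (hb1 i) (hb2 i) (hb1 i') (hb2 i') hv).1
    -- colors
    have col1 : ∀ i, colN m a (W i) = cd ((a:ℕ)/(2*m)) ((a:ℕ)/m%2) ((a:ℕ)%m) i (σa' i) (τa' i) := by
      intro i
      conv_lhs => rw [← hea]
      exact colN_enc hm hσa hτa (hb1 i) (hb2 i)
    have col2 : ∀ i, colN m (Z i) (W i) = cd i (σb' i) (τb' i) i (σa' i) (τa' i) :=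
      fun i => colN_enc hm (hb3 i) (hb4 i) (hb1 i) (hb2 i)
    have col3 : ∀ i, colN m (Z i) b = cd i (σb' i) (τb' i) ((b:ℕ)/(2*m)) ((b:ℕ)/m%2) ((b:ℕ)%m) := by
      intro i
      conv_lhs => rw [← heb]
      exact colN_enc hm (hb3 i) (hb4 i) hσb hτb
    refine ⟨fun i => p3 a (W i) (Z i) b, ?_, ?_, ?_⟩
    · intro i i' h
      have := congrArg Walk.support h
      simp only [p3_support, List.cons.injEq, Sum.inr.injEq, Sum.inl.injEq, and_true, true_and] at this
      exact hWinj _ _ this.1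
    · intro i
      refine ⟨p3_isPath (hWb i) (hZa i), ?_⟩
      have n1 : fin3 (colN m a (W i)) ≠ fin3 (colN m (Z i) (W i)) := by
        apply fin3_ne (colN_lt3 ..) (colN_lt3 ..)
        rw [col1 i, col2 i]; exact hc1 i
      have n2 : fin3 (colN m (Z i) (W i)) ≠ fin3 (colN m (Z i) b) := by
        apply fin3_ne (colN_lt3 ..) (colN_lt3 ..)
        rw [col2 i, col3 i]; exact hc2 i
      have n3 : fin3 (colN m a (W i)) ≠ fin3 (colN m (Z i) b) := by
        apply fin3_ne (colN_lt3 ..) (colN_lt3 ..)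
        rw [col1 i, col3 i]; exact hc3 i
      simp [List.nodup_cons, n1, n2, n3]
    · intro i i' hii' x hx1 hx2
      simp only [p3_support, List.mem_cons, List.not_mem_nil, or_false] at hx1 hx2
      rcases hx1 with h1 | h1 | h1 | h1
      · exact Or.inl h1
      · rcases hx2 with h2 | h2 | h2 | h2
        · exact Or.inl h2
        · rw [h1] at h2
          exact absurd (hWinj i i' (Sum.inr_injective h2)) hii'
        · rw [h1] at h2; simp at h2
        · exact Or.inr h2
      · rcases hx2 with h2 | h2 | h2 | h2
        · exact Or.inl h2
        · rw [h1] at h2; simp at h2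
        · rw [h1] at h2
          have hz : Z i = Z i' := Sum.inl_injective h2
          have hv : enc m (i:ℕ) (σb' i) (τb' i) = enc m (i':ℕ) (σb' i') (τb' i') :=
            congrArg Fin.val hz
          exact absurd (Fin.ext (enc_inj hm (hb3 i) (hb4 i) (hb3 i') (hb4 i') hv).1) hii'
        · exact Or.inr h2
      · exact Or.inr h1
  · -- k = 2, m = 1
    subst hk2; subst hm1
    obtain ⟨w, hw4, z, hz4, hwv, hzu, d1, d2, d3⟩ :=
      Ok2 (a:ℕ) (by have := a.isLt; omega) (b:ℕ) (by have := b.isLt; omega)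
    set W : Fin (2*2*1) := ⟨w, by omega⟩ with hWdef
    set Z : Fin (2*2*1) := ⟨z, by omega⟩ with hZdef
    have hWb : W ≠ b := fun h => hwv (congrArg Fin.val h)
    have hZa : Z ≠ a := fun h => hzu (congrArg Fin.val h)
    have fin2one : ∀ i : Fin 2, ¬ i = 0 → i = 1 := by decide
    refine ⟨fun i => if i = (0 : Fin 2) then pEdge a b else p3 a W Z b, ?_, ?_, ?_⟩
    · intro i i' h
      dsimp only at h
      by_cases hi : i = 0 <;> by_cases hi' : i' = 0
      · rw [hi, hi']
      · rw [if_pos hi, if_neg hi'] at h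
        have hl := congrArg Walk.length h
        simp [pEdge, p3] at hl
      · rw [if_neg hi, if_pos hi'] at h
        have hl := congrArg Walk.length h
        simp [pEdge, p3] at hl
      · rw [fin2one i hi, fin2one i' hi']
    · intro i
      dsimp only
      by_cases hi : i = 0
      · rw [if_pos hi]
        exact ⟨pEdge_isPath a b, by simp⟩
      · rw [if_neg hi]
        refine ⟨p3_isPath hWb hZa, ?_⟩
        have n1 : fin3 (colN 1 a W) ≠ fin3 (colN 1 Z W) :=
          fin3_ne (colN_lt3 ..) (colN_lt3 ..) d1
        have n2 : fin3 (colN 1 Z W) ≠ fin3 (colN 1 Z b) :=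
          fin3_ne (colN_lt3 ..) (colN_lt3 ..) d2
        have n3 : fin3 (colN 1 a W) ≠ fin3 (colN 1 Z b) :=
          fin3_ne (colN_lt3 ..) (colN_lt3 ..) d3
        simp [List.nodup_cons, n1, n2, n3]
    · intro i i' hii' x hx1 hx2
      dsimp only at hx1 hx2
      by_cases hi : i = 0
      · rw [if_pos hi] at hx1
        simp only [pEdge_support, List.mem_cons, List.not_mem_nil, or_false] at hx1
        tauto
      · have hi' : i' = 0 := by
          by_contra hcon
          exact hii' ((fin2one i hi).trans (fin2one i' hcon).symm)
        rw [if_pos hi'] at hx2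
        simp only [pEdge_support, List.mem_cons, List.not_mem_nil, or_false] at hx2
        tauto


lemma adj_flip {u w : Fin r ⊕ Fin r} (h : (Krr r).Adj u w) :
    u.isLeft = !w.isLeft := by
  rcases u with a|a <;> rcases w with c|c <;> simp_all

lemma walk_parity : ∀ {u v : Fin r ⊕ Fin r} (p : (Krr r).Walk u v),
    Even p.length ↔ (u.isLeft = v.isLeft) := by
  intro u v p
  induction p with
  | nil => simp
  | @cons u w v h q ih =>
    rw [Walk.length_cons, Nat.even_add_one, ih, adj_flip h]
    cases hw : w.isLeft <;> cases hv : v.isLeft <;> simp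

lemma length_one_unique {V : Type*} {G : SimpleGraph V} {u v : V} (p q : G.Walk u v)
    (hp : p.length = 1) (hq : q.length = 1) : p = q := by
  cases p with
  | nil => simp at hp
  | cons h p' =>
    cases p' with
    | nil =>
      cases q with
      | nil => simp at hq
      | cons h' q' =>
        cases q' with
        | nil => rfl
        | cons h'' q'' => simp [Walk.length_cons] at hq
    | cons h2 p'' => simp [Walk.length_cons] at hp

lemma not_has0 (k : ℕ) (hr : 0 < r) : ¬ HasRainbowKColoring (Krr r) k 0 := by
  rintro ⟨c, -⟩
  exact (c s(Sum.inl ⟨0, hr⟩, Sum.inr ⟨0, hr⟩)).elim0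

lemma not_has1 {k : ℕ} (hr : 2 ≤ r) (hk : 0 < k) : ¬ HasRainbowKColoring (Krr r) k 1 := by
  rintro ⟨c, h⟩
  obtain ⟨P, hinj, hrb, -⟩ := h (Sum.inl ⟨0, by omega⟩) (Sum.inl ⟨1, by omega⟩) (by simp)
  set p := P ⟨0, hk⟩ with hp
  have hle : p.length ≤ 1 := by
    have hcard := (hrb ⟨0, hk⟩).2.length_le_card
    simpa [Walk.length_edges] using hcard
  have heven : Even p.length := (walk_parity p).mpr rfl
  have h0 : p.length = 0 := by
    rcases heven with ⟨t, ht⟩; omega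
  have := Walk.eq_of_length_eq_zero h0
  simp at this
lemma not_has2 {k : ℕ} (hr : 0 < r) (hk : 2 ≤ k) : ¬ HasRainbowKColoring (Krr r) k 2 := by
  rintro ⟨c, h⟩
  obtain ⟨P, hinj, hrb, -⟩ := h (Sum.inl ⟨0, hr⟩) (Sum.inr ⟨0, hr⟩) (by simp)
  have key : ∀ i, (P i).length = 1 := by
    intro i
    have hodd : ¬ Even (P i).length := by
      rw [walk_parity (P i)]
      simp
    have hle : (P i).length ≤ 2 := by
      have hcard := (hrb i).2.length_le_card
      simpa [Walk.length_edges] using hcard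
    rcases Nat.even_or_odd (P i).length with he | ⟨t, ht⟩
    · exact absurd he hodd
    · omega
  have heq := length_one_unique (P ⟨0, by omega⟩) (P ⟨1, by omega⟩) (key _) (key _)
  have h01 : (⟨0, by omega⟩ : Fin k) ≠ ⟨1, by omega⟩ := by simp
  exact h01 (hinj heq)


lemma upper (k m : ℕ) (hm : 0 < m) (hkm : k ≤ 2*m)
    (hsp : 2 ≤ m ∨ (k = 2 ∧ m = 1)) : HasRainbowKColoring (Krr (2*k*m)) k 3 := by
  refine ⟨coloring m, ?_⟩
  rintro (a|a) (b|b) huv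
  · -- inl / inl
    have hab : a ≠ b := fun h => huv (congrArg Sum.inl h)
    obtain ⟨hxa, hσa, hτa, hea⟩ := decompose (k := k) hm a.isLt
    obtain ⟨hxb, hσb, hτb, heb⟩ := decompose (k := k) hm b.isLt
    have hne : ¬((a:ℕ)/(2*m) = (b:ℕ)/(2*m) ∧ (a:ℕ)/m%2 = (b:ℕ)/m%2 ∧ (a:ℕ)%m = (b:ℕ)%m) := by
      rintro ⟨h1, h2, h3⟩
      apply hab; apply Fin.ext
      rw [← hea, ← heb, h1, h2, h3]
    obtain ⟨J, hJinj, hJ⟩ := Scert hm hkm hxa hσa hτa hxb hσb hτb hne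
    set Jv : Fin k → Fin (2*k*m) := fun i =>
      ⟨enc m (J i).1 (J i).2.1 (J i).2.2, enc_lt (hJ i).1 (hJ i).2.1 (hJ i).2.2.1⟩ with hJvdef
    have hJvinj : ∀ i i', Jv i = Jv i' → i = i' := by
      intro i i' h
      have hv := congrArg Fin.val h
      obtain ⟨e1, e2, e3⟩ := enc_inj hm (hJ i).2.1 (hJ i).2.2.1 (hJ i').2.1 (hJ i').2.2.1 hv
      exact hJinj (Prod.ext e1 (Prod.ext e2 e3))
    have colprop : ∀ i, colN m a (Jv i) ≠ colN m b (Jv i) := by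
      intro i
      have c1 : colN m a (Jv i) =
          cd ((a:ℕ)/(2*m)) ((a:ℕ)/m%2) ((a:ℕ)%m) (J i).1 (J i).2.1 (J i).2.2 := by
        conv_lhs => rw [← hea]
        exact colN_enc hm hσa hτa (hJ i).2.1 (hJ i).2.2.1
      have c2 : colN m b (Jv i) =
          cd ((b:ℕ)/(2*m)) ((b:ℕ)/m%2) ((b:ℕ)%m) (J i).1 (J i).2.1 (J i).2.2 := by
        conv_lhs => rw [← heb]
        exact colN_enc hm hσb hτb (hJ i).2.1 (hJ i).2.2.1
      rw [c1, c2]; exact (hJ i).2.2.2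
    refine ⟨fun i => p2L a (Jv i) b, ?_, ?_, ?_⟩
    · intro i i' h
      have := congrArg Walk.support h
      simp only [p2L_support, List.cons.injEq, Sum.inr.injEq] at this
      exact hJvinj i i' this.2.1
    · intro i
      refine ⟨p2L_isPath _ hab, ?_⟩
      have n1 : fin3 (colN m a (Jv i)) ≠ fin3 (colN m b (Jv i)) :=
        fin3_ne (colN_lt3 ..) (colN_lt3 ..) (colprop i)
      simp [List.nodup_cons, n1]
    · intro i i' hii' x hx1 hx2
      simp only [p2L_support, List.mem_cons, List.not_mem_nil, or_false] at hx1 hx2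
      rcases hx1 with h1|h1|h1
      · exact Or.inl h1
      · rcases hx2 with h2|h2|h2
        · exact Or.inl h2
        · rw [h1] at h2
          exact absurd (hJvinj i i' (Sum.inr_injective h2)) hii'
        · exact Or.inr h2
      · exact Or.inr h1
  · -- inl / inr
    exact crossSys k m hm hsp a b
  · -- inr / inl : reverse
    obtain ⟨Q, hinj, hrb, hdis⟩ := crossSys k m hm hsp b a
    refine ⟨fun i => (Q i).reverse, ?_, ?_, ?_⟩
    · intro i i' h
      apply hinj
      have := congrArg Walk.reverse h
      rwa [Walk.reverse_reverse, Walk.reverse_reverse] at this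
    · intro i
      refine ⟨(hrb i).1.reverse, ?_⟩
      rw [Walk.edges_reverse, List.map_reverse]
      exact List.nodup_reverse.mpr (hrb i).2
    · intro i i' hii' x hx1 hx2
      rw [Walk.support_reverse, List.mem_reverse] at hx1 hx2
      exact (hdis i i' hii' x hx1 hx2).symm
  · -- inr / inr
    have hab : a ≠ b := fun h => huv (congrArg Sum.inr h)
    obtain ⟨hxa, hσa, hτa, hea⟩ := decompose (k := k) hm a.isLt
    obtain ⟨hxb, hσb, hτb, heb⟩ := decompose (k := k) hm b.isLt
    have hne : ¬((a:ℕ)/(2*m) = (b:ℕ)/(2*m) ∧ (a:ℕ)/m%2 = (b:ℕ)/m%2 ∧ (a:ℕ)%m = (b:ℕ)%m) := by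
      rintro ⟨h1, h2, h3⟩
      apply hab; apply Fin.ext
      rw [← hea, ← heb, h1, h2, h3]
    obtain ⟨J, hJinj, hJ⟩ := Scert hm hkm hxa hσa hτa hxb hσb hτb hne
    set Jv : Fin k → Fin (2*k*m) := fun i =>
      ⟨enc m (J i).1 (J i).2.1 (J i).2.2, enc_lt (hJ i).1 (hJ i).2.1 (hJ i).2.2.1⟩ with hJvdef
    have hJvinj : ∀ i i', Jv i = Jv i' → i = i' := by
      intro i i' h
      have hv := congrArg Fin.val h
      obtain ⟨e1, e2, e3⟩ := enc_inj hm (hJ i).2.1 (hJ i).2.2.1 (hJ i').2.1 (hJ i').2.2.1 hv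
      exact hJinj (Prod.ext e1 (Prod.ext e2 e3))
    have colprop : ∀ i, colN m (Jv i) a ≠ colN m (Jv i) b := by
      intro i
      rw [colN_symm m (Jv i) a, colN_symm m (Jv i) b]
      have c1 : colN m a (Jv i) =
          cd ((a:ℕ)/(2*m)) ((a:ℕ)/m%2) ((a:ℕ)%m) (J i).1 (J i).2.1 (J i).2.2 := by
        conv_lhs => rw [← hea]
        exact colN_enc hm hσa hτa (hJ i).2.1 (hJ i).2.2.1
      have c2 : colN m b (Jv i) =
          cd ((b:ℕ)/(2*m)) ((b:ℕ)/m%2) ((b:ℕ)%m) (J i).1 (J i).2.1 (J i).2.2 := by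
        conv_lhs => rw [← heb]
        exact colN_enc hm hσb hτb (hJ i).2.1 (hJ i).2.2.1
      rw [c1, c2]; exact (hJ i).2.2.2
    refine ⟨fun i => p2R a (Jv i) b, ?_, ?_, ?_⟩
    · intro i i' h
      have := congrArg Walk.support h
      simp only [p2R_support, List.cons.injEq, Sum.inl.injEq] at this
      exact hJvinj i i' this.2.1
    · intro i
      refine ⟨p2R_isPath _ hab, ?_⟩
      have n1 : fin3 (colN m (Jv i) a) ≠ fin3 (colN m (Jv i) b) :=
        fin3_ne (colN_lt3 ..) (colN_lt3 ..) (colprop i)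
      simp [List.nodup_cons, n1]
    · intro i i' hii' x hx1 hx2
      simp only [p2R_support, List.mem_cons, List.not_mem_nil, or_false] at hx1 hx2
      rcases hx1 with h1|h1|h1
      · exact Or.inl h1
      · rcases hx2 with h2|h2|h2
        · exact Or.inl h2
        · rw [h1] at h2
          exact absurd (hJvinj i i' (Sum.inl_injective h2)) hii'
        · exact Or.inr h2
      · exact Or.inr h1

end RBAux

theorem stmt4 (k : ℕ) (hk : 2 ≤ k) :
    ∃ r : ℕ, rck (Krr r) k = 3 ∧ r = 2 * k * ((k + 1) / 2) := by
  refine ⟨2 * k * ((k + 1) / 2), ?_, rfl⟩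
  have hm : 0 < (k+1)/2 := by omega
  have hkm : k ≤ 2*((k+1)/2) := by omega
  have hsp : 2 ≤ (k+1)/2 ∨ (k = 2 ∧ (k+1)/2 = 1) := by omega
  have hup := RBAux.upper k ((k+1)/2) hm hkm hsp
  have hr2 : 2 ≤ 2*k*((k+1)/2) := by
    calc 2 = 2*1*1 := by norm_num
    _ ≤ 2*k*((k+1)/2) := Nat.mul_le_mul (Nat.mul_le_mul le_rfl (by omega)) hm
  unfold rck
  have h3 : 3 ∈ {j | HasRainbowKColoring (Krr (2*k*((k+1)/2))) k j} := hup
  have hne : {j | HasRainbowKColoring (Krr (2*k*((k+1)/2))) k j}.Nonempty := ⟨3, h3⟩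
  have hmem := Nat.sInf_mem hne
  have hle := Nat.sInf_le h3
  set n := sInf {j | HasRainbowKColoring (Krr (2*k*((k+1)/2))) k j} with hn
  interval_cases n
  · exact absurd hmem (RBAux.not_has0 k (by omega))
  · exact absurd hmem (RBAux.not_has1 hr2 (by omega))
  · exact absurd hmem (RBAux.not_has2 (by omega) hk)
  · rfl
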